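/- Let G be a finite connected simple graph on n vertices with m edges, let L be its Laplacian matrix, and let L⁺ be a matrix satisfying the four Penrose equations for L. Let u ≠ v be vertices, let N > 0 be the number of spanning trees of G, and for adjacent a, b let N_{u,v}(a,b) be the number of spanning trees T of G in which the unique path from u to v in T traverses the edge {a,b} in the direction from a to b. Then for every path ⟨u = v₀, v₁, …, v_k = v⟩ in G, (1/N) · ∑_{i=0}^{k−1} ( N_{u,v}(v_i, v_{i+1}) − N_{u,v}(v_{i+1}, v_i) ) = (e_u − e_v)ᵀ L⁺ (e_u − e_v), i.e., the path sum of the spanning-tree flow equals the effective resistance R(u,v). -/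

import Mathlib

open SimpleGraph Matrix

variable {V : Type*}

def PathTraverses (T : SimpleGraph V) (u v a b : V) : Prop :=
  ∃ p : T.Walk u v, p.IsPath ∧ ∃ d ∈ p.darts, d.toProd = (a, b)

def IsSpanningTreeOf (T G : SimpleGraph V) : Prop := T ≤ G ∧ T.IsTree

def QQ (u v : V) (T : SimpleGraph V) (a b : V) : Prop :=
  T.Adj a b ∧ (T.deleteEdges {s(a,b)}).Reachable u a ∧ (T.deleteEdges {s(a,b)}).Reachable v b

lemma sum_darts_map_sub {H : SimpleGraph V} (f : V → ℝ) :
    ∀ {x y : V} (p : H.Walk x y),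
      (p.darts.map (fun d => f d.toProd.1 - f d.toProd.2)).sum = f x - f y := by
  intro x y p
  induction p with
  | nil => simp
  | cons h q ih => simp [ih]

lemma reach_of_mem_support [DecidableEq V] {H : SimpleGraph V} {x y w : V} (p : H.Walk x y)
    (h : w ∈ p.support) : H.Reachable x w := ⟨p.takeUntil w h⟩

lemma reachable_deleteEdges_or {H : SimpleGraph V} {a b x w : V} (h : H.Reachable x w) :
    (H.deleteEdges {s(a,b)}).Reachable x w ∨ (H.deleteEdges {s(a,b)}).Reachable a w ∨
      (H.deleteEdges {s(a,b)}).Reachable b w := by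
  classical
  obtain ⟨p⟩ := h
  induction p with
  | nil => exact Or.inl (Reachable.refl _)
  | @cons x y _ hxy q ih =>
    rcases ih with h' | h' | h'
    · by_cases he : s(x, y) = s(a, b)
      · rw [Sym2.eq_iff] at he
        rcases he with ⟨rfl, rfl⟩ | ⟨rfl, rfl⟩
        · exact Or.inr (Or.inr h')
        · exact Or.inr (Or.inl h')
      · exact Or.inl ((Adj.reachable (by simp [he, hxy])).trans h')
    · exact Or.inr (Or.inl h')
    · exact Or.inr (Or.inr h')

lemma traverses_to_Q [DecidableEq V] {T : SimpleGraph V} {u v a b : V} :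
    ∀ (p : T.Walk u v), p.IsPath → (∃ d ∈ p.darts, d.toProd = (a, b)) → QQ u v T a b := by
  intro p
  induction p with
  | nil => rintro _ ⟨d, hd, -⟩; simp at hd
  | @cons u w _ h q ih =>
    intro hp hdd
    have husupp : u ∉ q.support := by
      have := hp.support_nodup
      rw [Walk.support_cons, List.nodup_cons] at this
      exact this.1
    obtain ⟨d, hd, hdp⟩ := hdd
    rcases List.mem_cons.mp hd with rfl | hd'
    · obtain ⟨ha, hb⟩ := Prod.ext_iff.mp hdp
      simp only at ha hb
      subst ha; subst hb
      refine ⟨h, Reachable.refl _, ?_⟩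
      have hedge : ∀ e ∈ q.edges, e ∉ ({s(u, w)} : Set (Sym2 V)) := by
        intro e he hes
        rw [Set.mem_singleton_iff] at hes
        subst hes
        exact husupp (Walk.fst_mem_support_of_mem_edges q he)
      exact ⟨(q.toDeleteEdges {s(u,w)} hedge).reverse⟩
    · have hq := ih hp.of_cons ⟨d, hd', hdp⟩
      refine ⟨hq.1, ?_, hq.2.2⟩
      have hmem : s(a, b) ∈ q.edges := by
        have hde : d.edge = s(a, b) := by rw [Dart.edge, hdp]
        exact hde ▸ List.mem_map_of_mem (f := Dart.edge) hd'
      have hne : s(u, w) ≠ s(a, b) := by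
        intro he
        have hedges := hp.edges_nodup
        rw [Walk.edges_cons, List.nodup_cons] at hedges
        exact hedges.1 (he ▸ hmem)
      have hadj : (T.deleteEdges {s(a,b)}).Adj u w := by simp [h, hne]
      exact hadj.reachable.trans hq.2.1

lemma support_mapLe_eq {G G' : SimpleGraph V} (h : G ≤ G') {x y : V} (p : G.Walk x y) :
    (p.mapLe h).support = p.support := by
  have : ⇑(Hom.ofLE h) = id := rfl
  simp [Walk.mapLe, Walk.support_map, this]

lemma isAcyclic_mono {H K : SimpleGraph V} (hle : H ≤ K) (hK : K.IsAcyclic) : H.IsAcyclic :=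
  fun _ c hc => hK (c.mapLe hle) (hc.mapLe _)

lemma Q_to_traverses [DecidableEq V] {T : SimpleGraph V} {u v a b : V}
    (hac : T.IsAcyclic) (hQ : QQ u v T a b) : PathTraverses T u v a b := by
  obtain ⟨hadj, hua, hvb⟩ := hQ
  have hbr : ¬(T.deleteEdges {s(a, b)}).Reachable a b :=
    (isBridge_iff.mp ((isAcyclic_iff_forall_adj_isBridge.mp hac) hadj))
  obtain ⟨w1⟩ := id hua
  obtain ⟨w2⟩ := id hvb
  set Φ := T.deleteEdges {s(a, b)} with hΦ
  have hle : Φ ≤ T := T.deleteEdges_le _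
  let p1 := w1.bypass
  have hp1 : p1.IsPath := w1.bypass_isPath
  let p2 := w2.bypass
  have hp2 : p2.IsPath := w2.bypass_isPath
  refine ⟨(p1.mapLe hle).append (Walk.cons hadj (p2.reverse.mapLe hle)), ?_, ?_⟩
  · rw [Walk.isPath_def, Walk.support_append, Walk.support_cons, List.tail_cons,
      support_mapLe_eq, support_mapLe_eq, List.nodup_append]
    refine ⟨hp1.support_nodup, (hp2.reverse).support_nodup, ?_⟩
    rintro x hx1 _ hx2 rfl
    have hux : Φ.Reachable u x := reach_of_mem_support p1 hx1
    have hvx : Φ.Reachable v x := by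
      rw [Walk.support_reverse, List.mem_reverse] at hx2
      exact reach_of_mem_support p2 hx2
    exact hbr (hua.symm.trans ((hux.trans hvx.symm).trans hvb))
  · refine ⟨⟨(a, b), hadj⟩, ?_, rfl⟩
    rw [Walk.darts_append, List.mem_append, Walk.darts_cons]
    exact Or.inr List.mem_cons_self

lemma tree_to_forest [DecidableEq V] {T : SimpleGraph V} {u v a b : V}
    (hconn : T.Connected) (hac : T.IsAcyclic) (hQ : QQ u v T a b) :
    (T.deleteEdges {s(a,b)}).IsAcyclic ∧ ¬(T.deleteEdges {s(a,b)}).Reachable u v ∧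
      ∀ w, (T.deleteEdges {s(a,b)}).Reachable u w ∨ (T.deleteEdges {s(a,b)}).Reachable v w := by
  obtain ⟨hadj, hua, hvb⟩ := hQ
  have hbr : ¬(T.deleteEdges {s(a, b)}).Reachable a b :=
    (isBridge_iff.mp ((isAcyclic_iff_forall_adj_isBridge.mp hac) hadj))
  refine ⟨isAcyclic_mono (T.deleteEdges_le _) hac, ?_, ?_⟩
  · intro hr
    exact hbr (hua.symm.trans (hr.trans hvb))
  · intro w
    rcases reachable_deleteEdges_or (a := a) (b := b) (hconn.preconnected a w) with h | h | h
    · exact Or.inl (hua.trans h)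
    · exact Or.inl (hua.trans h)
    · exact Or.inr (hvb.trans h)

lemma forest_to_tree {G Φ : SimpleGraph V} {u v a b : V}
    (hΦG : Φ ≤ G) (hab : G.Adj a b) (hfa : Φ.IsAcyclic) (hnr : ¬Φ.Reachable u v)
    (htot : ∀ w, Φ.Reachable u w ∨ Φ.Reachable v w)
    (hua : Φ.Reachable u a) (hvb : Φ.Reachable v b) :
    (Φ ⊔ edge a b) ≤ G ∧ (Φ ⊔ edge a b).IsTree ∧
      (Φ ⊔ edge a b).deleteEdges {s(a,b)} = Φ ∧ QQ u v (Φ ⊔ edge a b) a b := by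
  classical
  have hne : a ≠ b := hab.ne
  have hnadj : ¬Φ.Adj a b := fun h => hnr (hua.trans (h.reachable.trans hvb.symm))
  set T := Φ ⊔ edge a b with hT
  have hTadj : T.Adj a b := by
    rw [hT, sup_adj, edge_adj]
    exact Or.inr ⟨Or.inl ⟨rfl, rfl⟩, hne⟩
  have hdel : T.deleteEdges {s(a,b)} = Φ := by
    ext x y
    simp only [deleteEdges_adj, hT, sup_adj, edge_adj, Set.mem_singleton_iff, Sym2.eq_iff]
    constructor
    · rintro ⟨h | ⟨⟨rfl, rfl⟩ | ⟨rfl, rfl⟩, -⟩, hne'⟩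
      · exact h
      · exact absurd (Or.inl ⟨rfl, rfl⟩) hne'
      · exact absurd (Or.inr ⟨rfl, rfl⟩) hne'
    · intro h
      refine ⟨Or.inl h, ?_⟩
      rintro (⟨rfl, rfl⟩ | ⟨rfl, rfl⟩)
      · exact hnadj h
      · exact hnadj h.symm
  have hedge_le : edge a b ≤ G := by
    intro x y hxy
    rw [edge_adj] at hxy
    rcases hxy with ⟨⟨rfl, rfl⟩ | ⟨rfl, rfl⟩, -⟩
    · exact hab
    · exact hab.symm
  have hΦT : Φ ≤ T := le_sup_left
  have hreachu : ∀ w, T.Reachable u w := by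
    intro w
    rcases htot w with h | h
    · exact h.mono hΦT
    · exact ((hua.mono hΦT).trans (hTadj.reachable.trans
        (((hvb.mono hΦT).symm.trans (h.mono hΦT)) : T.Reachable b w)))
  have hconn : T.Connected := by
    rw [connected_iff]
    exact ⟨fun x y => (hreachu x).symm.trans (hreachu y), ⟨u⟩⟩
  have hacyc : T.IsAcyclic := by
    intro x c hc
    by_cases he : s(a, b) ∈ c.edges
    · have h2 := (adj_and_reachable_delete_edges_iff_exists_cycle.mpr ⟨x, c, hc, he⟩).2
      have h3 : (T.deleteEdges {s(a,b)}).Reachable a b := h2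
      rw [hdel] at h3
      exact hnr (hua.trans (h3.trans hvb.symm))
    · have hsub : ∀ e ∈ c.edges, e ∈ Φ.edgeSet := by
        intro e hec
        have h1 : e ∈ T.edgeSet := c.edges_subset_edgeSet hec
        have h2 : e ∈ (T.deleteEdges {s(a,b)}).edgeSet := by
          rw [edgeSet_deleteEdges]
          refine ⟨h1, ?_⟩
          intro hmem
          rw [Set.mem_singleton_iff] at hmem
          exact he (hmem ▸ hec)
        rwa [hdel] at h2
      exact hfa (c.transfer Φ hsub) (hc.transfer hsub)
  refine ⟨sup_le hΦG hedge_le, ⟨hconn, hacyc⟩, hdel, hTadj, ?_, ?_⟩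
  · rw [hdel]; exact hua
  · rw [hdel]; exact hvb

section LinAlg

variable [Fintype V] [DecidableEq V] (G : SimpleGraph V) [DecidableRel G.Adj]

lemma lap_kernel_const (hG : G.Connected) (x : V → ℝ)
    (hx : (G.lapMatrix ℝ) *ᵥ x = 0) : ∀ i j, x i = x j := by
  have h := (lapMatrix_mulVec_eq_zero_iff_forall_reachable (G := G)).mp
    hx
  exact fun i j => h i j (hG.preconnected i j)

lemma lap_col_sum_zero (j : V) : ∑ w, (G.lapMatrix ℝ) w j = 0 := by
  have hsym : (G.lapMatrix ℝ)ᵀ = G.lapMatrix ℝ := G.isSymm_lapMatrix (R := ℝ)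
  have hrow := congrFun (G.lapMatrix_mulVec_const_eq_zero (R := ℝ)) j
  simp only [Matrix.mulVec, dotProduct, mul_one, Pi.zero_apply] at hrow
  calc ∑ w, (G.lapMatrix ℝ) w j = ∑ w, (G.lapMatrix ℝ) j w := by
        refine Finset.sum_congr rfl fun w _ => ?_
        conv_lhs => rw [← hsym]
        rfl
    _ = 0 := hrow
  
lemma penrose_mulVec (hG : G.Connected) (Lp : Matrix V V ℝ)
    (h1 : G.lapMatrix ℝ * Lp * G.lapMatrix ℝ = G.lapMatrix ℝ)
    (h3 : (G.lapMatrix ℝ * Lp)ᵀ = G.lapMatrix ℝ * Lp)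
    (y : V → ℝ) (hy : ∑ w, y w = 0) :
    (G.lapMatrix ℝ) *ᵥ (Lp *ᵥ y) = y := by
  set L := G.lapMatrix ℝ with hL
  have hLsymm : Lᵀ = L := G.isSymm_lapMatrix (R := ℝ)
  have hLL : L * (L * Lp) = L := by
    have h2 := congrArg Matrix.transpose h1
    rw [Matrix.transpose_mul, h3, hLsymm] at h2
    exact h2
  set z : V → ℝ := y - L *ᵥ (Lp *ᵥ y) with hz
  have hzker : L *ᵥ z = 0 := by
    have hkey : L *ᵥ (L *ᵥ (Lp *ᵥ y)) = L *ᵥ y := by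
      rw [Matrix.mulVec_mulVec, Matrix.mulVec_mulVec, Matrix.mul_assoc, hLL]
    rw [hz, Matrix.mulVec_sub, hkey, sub_self]
  have hconst := lap_kernel_const G hG z hzker
  have hsumz : ∑ w, z w = 0 := by
    rw [hz]
    simp only [Pi.sub_apply, Finset.sum_sub_distrib, hy, zero_sub, neg_eq_zero]
    calc ∑ x, (L *ᵥ (Lp *ᵥ y)) x = ∑ x, ∑ j, L x j * (Lp *ᵥ y) j := by
          simp [Matrix.mulVec, dotProduct]
      _ = ∑ j, (∑ x, L x j) * (Lp *ᵥ y) j := by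
          rw [Finset.sum_comm]
          simp [Finset.sum_mul]
      _ = 0 := by simp [hL, lap_col_sum_zero]
  have hz0 : ∀ w, z w = 0 := by
    intro w
    have hcard : (0:ℝ) < (Fintype.card V : ℝ) := by
      have : 0 < Fintype.card V := Fintype.card_pos_iff.mpr ⟨w⟩
      exact_mod_cast this
    have : ∑ w', z w' = (Fintype.card V : ℝ) * z w := by
      rw [Finset.sum_congr rfl fun w' _ => hconst w' w]
      simp [Finset.card_univ, mul_comm]
    rw [hsumz] at this
    have := this.symm
    rcases mul_eq_zero.mp this with h | h
    · exact absurd h (ne_of_gt hcard)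
    · exact h
  have : z = 0 := funext hz0
  rw [hz] at this
  have := sub_eq_zero.mp this
  exact this.symm

end LinAlg

section Counting

open scoped Classical

variable [Fintype V] [DecidableEq V]

lemma Q_iff_mem_darts {T : SimpleGraph V} {u v : V} (hT : T.IsTree) :
    ∀ a b, QQ u v T a b ↔ (a, b) ∈ (Classical.choose (hT.existsUnique_path u v)).darts.map Dart.toProd := by
  intro a b
  obtain ⟨hp0, hup⟩ := Classical.choose_spec (hT.existsUnique_path u v)
  set p0 := Classical.choose (hT.existsUnique_path u v)
  constructor
  · intro hQ
    obtain ⟨p, hp, d, hd, hdp⟩ := Q_to_traverses hT.2 hQ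
    rw [hup p hp] at hd
    exact hdp ▸ List.mem_map_of_mem (f := Dart.toProd) hd
  · intro hmem
    rw [List.mem_map] at hmem
    obtain ⟨d, hd, hdp⟩ := hmem
    exact traverses_to_Q p0 hp0 ⟨d, hd, hdp⟩

lemma tree_divergence {G T : SimpleGraph V} [DecidableRel G.Adj] {u v : V}
    (hTG : T ≤ G) (hT : T.IsTree) (w : V) :
    ∑ b ∈ G.neighborFinset w,
      ((if QQ u v T w b then (1:ℝ) else 0) - (if QQ u v T b w then (1:ℝ) else 0)) =
      (if u = w then (1:ℝ) else 0) - (if v = w then (1:ℝ) else 0) := by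
  classical
  obtain ⟨hp0, hup⟩ := Classical.choose_spec (hT.existsUnique_path u v)
  set p0 := Classical.choose (hT.existsUnique_path u v) with hp0def
  have hQiff := Q_iff_mem_darts (u := u) (v := v) hT
  set L : List (V × V) := p0.darts.map Dart.toProd with hLdef
  have hnodL : L.Nodup :=
    (Walk.darts_nodup_of_support_nodup hp0.support_nodup).map Dart.toProd_injective
  have hadjL : ∀ x ∈ L, G.Adj x.1 x.2 := by
    rintro x hx
    rw [hLdef, List.mem_map] at hx
    obtain ⟨d, hd, rfl⟩ := hx
    exact hTG d.adj
  have hS1 : ∀ c : V, ((G.neighborFinset c).filter (fun b => (c, b) ∈ L)).card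
      = (L.toFinset.filter (fun x => x.1 = c)).card := by
    intro c
    refine Finset.card_nbij' (fun b => (c, b)) Prod.snd ?_ ?_ ?_ ?_
    · intro b hb
      rw [Finset.mem_coe, Finset.mem_filter] at hb ⊢
      exact ⟨List.mem_toFinset.mpr hb.2, rfl⟩
    · intro x hx
      rw [Finset.mem_coe, Finset.mem_filter, List.mem_toFinset] at hx
      obtain ⟨hxL, hx1⟩ := hx
      rw [Finset.mem_coe, Finset.mem_filter, mem_neighborFinset]
      have := hadjL x hxL
      rw [hx1] at this
      refine ⟨this, ?_⟩
      have : (c, x.2) = x := by rw [← hx1]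
      rw [this]
      exact hxL
    · intro b _; rfl
    · intro x hx
      rw [Finset.mem_coe, Finset.mem_filter, List.mem_toFinset] at hx
      exact Prod.ext_iff.mpr ⟨hx.2.symm, rfl⟩
  have hS2 : ∀ c : V, ((G.neighborFinset c).filter (fun b => (b, c) ∈ L)).card
      = (L.toFinset.filter (fun x => x.2 = c)).card := by
    intro c
    refine Finset.card_nbij' (fun b => (b, c)) Prod.fst ?_ ?_ ?_ ?_
    · intro b hb
      rw [Finset.mem_coe, Finset.mem_filter] at hb ⊢
      exact ⟨List.mem_toFinset.mpr hb.2, rfl⟩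
    · intro x hx
      rw [Finset.mem_coe, Finset.mem_filter, List.mem_toFinset] at hx
      obtain ⟨hxL, hx2⟩ := hx
      rw [Finset.mem_coe, Finset.mem_filter, mem_neighborFinset]
      have h := hadjL x hxL
      rw [hx2] at h
      refine ⟨h.symm, ?_⟩
      have : (x.1, c) = x := by rw [← hx2]
      rw [this]
      exact hxL
    · intro b _; rfl
    · intro x hx
      rw [Finset.mem_coe, Finset.mem_filter, List.mem_toFinset] at hx
      exact Prod.ext_iff.mpr ⟨rfl, hx.2.symm⟩
  calc ∑ b ∈ G.neighborFinset w,
        ((if QQ u v T w b then (1:ℝ) else 0) - (if QQ u v T b w then (1:ℝ) else 0))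
      = ∑ b ∈ G.neighborFinset w,
        ((if (w, b) ∈ L then (1:ℝ) else 0) - (if (b, w) ∈ L then (1:ℝ) else 0)) := by
        refine Finset.sum_congr rfl fun b _ => ?_
        rw [if_congr (hQiff w b) rfl rfl, if_congr (hQiff b w) rfl rfl]
    _ = (((G.neighborFinset w).filter (fun b => (w, b) ∈ L)).card : ℝ)
        - ((G.neighborFinset w).filter (fun b => (b, w) ∈ L)).card := by
        rw [Finset.sum_sub_distrib, Finset.sum_boole, Finset.sum_boole]
    _ = ((L.toFinset.filter (fun x => x.1 = w)).card : ℝ)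
        - (L.toFinset.filter (fun x => x.2 = w)).card := by rw [hS1, hS2]
    _ = ∑ x ∈ L.toFinset, ((if x.1 = w then (1:ℝ) else 0) - (if x.2 = w then (1:ℝ) else 0)) := by
        rw [Finset.sum_sub_distrib, Finset.sum_boole, Finset.sum_boole]
    _ = (L.map (fun x => (if x.1 = w then (1:ℝ) else 0) - (if x.2 = w then (1:ℝ) else 0))).sum := by
        rw [List.sum_toFinset _ hnodL]
    _ = (p0.darts.map (fun d => (if d.toProd.1 = w then (1:ℝ) else 0)
          - (if d.toProd.2 = w then (1:ℝ) else 0))).sum := by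
        rw [hLdef, List.map_map]
        rfl
    _ = (if u = w then (1:ℝ) else 0) - (if v = w then (1:ℝ) else 0) :=
        sum_darts_map_sub (fun z => if z = w then (1:ℝ) else 0) p0

end Counting

section Counting2

open scoped Classical

variable [Fintype V] [DecidableEq V]

/-- The two-component spanning forest predicate. -/
def IsUVForest (G : SimpleGraph V) (u v : V) (Φ : SimpleGraph V) : Prop :=
  Φ ≤ G ∧ Φ.IsAcyclic ∧ ¬Φ.Reachable u v ∧ ∀ w, Φ.Reachable u w ∨ Φ.Reachable v w

lemma sup_edge_deleteEdges {T : SimpleGraph V} {a b : V} (hadj : T.Adj a b) :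
    T.deleteEdges {s(a,b)} ⊔ edge a b = T := by
  apply le_antisymm
  · refine sup_le (T.deleteEdges_le _) ?_
    intro x y hxy
    rw [edge_adj] at hxy
    rcases hxy with ⟨⟨rfl, rfl⟩ | ⟨rfl, rfl⟩, -⟩
    · exact hadj
    · exact hadj.symm
  · intro x y hxy
    rw [sup_adj]
    by_cases he : s(x, y) = s(a, b)
    · rw [Sym2.eq_iff] at he
      right
      rw [edge_adj]
      exact ⟨he, hxy.ne⟩
    · left
      rw [deleteEdges_adj]
      exact ⟨hxy, by simpa using he⟩

lemma card_trees_eq_card_forests {G : SimpleGraph V} {u v a b : V} (hab : G.Adj a b) :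
    (Finset.univ.filter (fun T : SimpleGraph V => IsSpanningTreeOf T G ∧ QQ u v T a b)).card =
    (Finset.univ.filter (fun Φ : SimpleGraph V =>
      IsUVForest G u v Φ ∧ Φ.Reachable u a ∧ Φ.Reachable v b)).card := by
  refine Finset.card_nbij' (fun T => T.deleteEdges {s(a,b)}) (fun Φ => Φ ⊔ edge a b) ?_ ?_ ?_ ?_
  · intro T hT
    rw [Finset.mem_coe, Finset.mem_filter] at hT
    obtain ⟨-, hsp, hQ⟩ := hT
    obtain ⟨hTG, hTree⟩ := (hsp : T ≤ G ∧ T.IsTree)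
    obtain ⟨hacyc, hnr, htot⟩ := tree_to_forest hTree.isConnected hTree.IsAcyclic hQ
    rw [Finset.mem_coe, Finset.mem_filter]
    exact ⟨Finset.mem_univ _, ⟨(T.deleteEdges_le _).trans hTG, hacyc, hnr, htot⟩, hQ.2.1, hQ.2.2⟩
  · intro Φ hΦ
    rw [Finset.mem_coe, Finset.mem_filter] at hΦ
    obtain ⟨-, ⟨hΦG, hacyc, hnr, htot⟩, hua, hvb⟩ := hΦ
    obtain ⟨hTG, hTree, hdel, hQ⟩ := forest_to_tree hΦG hab hacyc hnr htot hua hvb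
    rw [Finset.mem_coe, Finset.mem_filter]
    exact ⟨Finset.mem_univ _, ⟨hTG, hTree⟩, hQ⟩
  · intro T hT
    rw [Finset.mem_coe, Finset.mem_filter] at hT
    exact sup_edge_deleteEdges hT.2.2.1
  · intro Φ hΦ
    rw [Finset.mem_coe, Finset.mem_filter] at hΦ
    obtain ⟨-, ⟨hΦG, hacyc, hnr, htot⟩, hua, hvb⟩ := hΦ
    exact (forest_to_tree hΦG hab hacyc hnr htot hua hvb).2.2.1

end Counting2

def IsPenrosePseudoinverse {V : Type*} [Fintype V] [DecidableEq V]
    (L Lp : Matrix V V ℝ) : Prop :=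
  L * Lp * L = L ∧ Lp * L * Lp = Lp ∧ (L * Lp)ᵀ = L * Lp ∧ (Lp * L)ᵀ = Lp * L

theorem path_sum_of_spanning_tree_flow_eq_effective_resistance
    [Fintype V] [DecidableEq V]
    (G : SimpleGraph V) [DecidableRel G.Adj] (hG : G.Connected)
    (Lp : Matrix V V ℝ)
    (hpenrose : IsPenrosePseudoinverse (G.lapMatrix ℝ) Lp)
    (u v : V) (huv : u ≠ v)
    (N : ℕ) (hN : N = Set.ncard {T : SimpleGraph V | IsSpanningTreeOf T G})
    (hNpos : 0 < N)
    (Nuv : V → V → ℕ)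
    (hNuv : ∀ a b, Nuv a b =
      Set.ncard {T : SimpleGraph V | IsSpanningTreeOf T G ∧ PathTraverses T u v a b}) :
    ∀ p : G.Walk u v, p.IsPath →
      (1 / (N : ℝ)) *
          (p.darts.map (fun d => ((Nuv d.toProd.1 d.toProd.2 : ℝ) -
            (Nuv d.toProd.2 d.toProd.1 : ℝ)))).sum =
        (Pi.single u 1 - Pi.single v 1) ⬝ᵥ
          Lp.mulVec (Pi.single u 1 - Pi.single v 1) := by
  classical
  intro p hp
  set y : V → ℝ := Pi.single u 1 - Pi.single v 1 with hy_def
  set x : V → ℝ := Lp *ᵥ y with hx_def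
  set 𝒯 : Finset (SimpleGraph V) :=
    Finset.univ.filter (fun T => IsSpanningTreeOf T G) with h𝒯
  set ℱ : Finset (SimpleGraph V) :=
    Finset.univ.filter (fun Φ => IsUVForest G u v Φ) with hℱ
  set φf : V → ℝ := fun w => ((ℱ.filter (fun Φ => Φ.Reachable u w)).card : ℝ) with hφf
  -- N = card 𝒯
  have hN' : (N : ℝ) = (𝒯.card : ℝ) := by
    rw [hN, Set.ncard_eq_toFinset_card', Set.toFinset_setOf]
  -- Nuv in terms of 𝒯 filters
  have hNuv' : ∀ a b, (Nuv a b : ℕ) = (𝒯.filter (fun T => QQ u v T a b)).card := by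
    intro a b
    rw [hNuv a b]
    have hset : {T : SimpleGraph V | IsSpanningTreeOf T G ∧ PathTraverses T u v a b} =
        {T : SimpleGraph V | IsSpanningTreeOf T G ∧ QQ u v T a b} := by
      ext T
      simp only [Set.mem_setOf_eq, and_congr_right_iff]
      intro hT
      constructor
      · rintro ⟨q, hq, hd⟩
        exact traverses_to_Q q hq hd
      · intro hQ
        exact Q_to_traverses hT.2.IsAcyclic hQ
    rw [hset, Set.ncard_eq_toFinset_card', Set.toFinset_setOf, h𝒯, Finset.filter_filter]
  -- the gradient property
  have key1 : ∀ a b, G.Adj a b → (Nuv a b : ℝ) - (Nuv b a : ℝ) = φf a - φf b := by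
    intro a b hab
    have h1 : (𝒯.filter (fun T => QQ u v T a b)).card =
        (ℱ.filter (fun Φ => Φ.Reachable u a ∧ Φ.Reachable v b)).card := by
      rw [h𝒯, hℱ, Finset.filter_filter, Finset.filter_filter]
      exact card_trees_eq_card_forests (u := u) (v := v) hab
    have h2 : (𝒯.filter (fun T => QQ u v T b a)).card =
        (ℱ.filter (fun Φ => Φ.Reachable u b ∧ Φ.Reachable v a)).card := by
      rw [h𝒯, hℱ, Finset.filter_filter, Finset.filter_filter]
      exact card_trees_eq_card_forests (u := u) (v := v) hab.symm
    rw [hNuv' a b, hNuv' b a, h1, h2, hφf]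
    push_cast [← Finset.sum_boole]
    rw [← Finset.sum_sub_distrib, ← Finset.sum_sub_distrib]
    refine Finset.sum_congr rfl fun Φ hΦ => ?_
    rw [hℱ, Finset.mem_filter] at hΦ
    obtain ⟨-, hΦG, hac, hnr, htot⟩ := hΦ
    by_cases hra : Φ.Reachable u a <;> by_cases hrb : Φ.Reachable u b
    · have hnvb : ¬Φ.Reachable v b := fun h => hnr (hrb.trans h.symm)
      have hnva : ¬Φ.Reachable v a := fun h => hnr (hra.trans h.symm)
      simp [hra, hrb, hnvb, hnva]
    · have hvb : Φ.Reachable v b := (htot b).resolve_left hrb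
      simp [hra, hrb, hvb]
    · have hva : Φ.Reachable v a := (htot a).resolve_left hra
      simp [hra, hrb, hva]
    · simp [hra, hrb]
  -- divergence : L φf = N • y
  have key2 : (G.lapMatrix ℝ) *ᵥ φf = (N : ℝ) • y := by
    funext w
    rw [lapMatrix_mulVec_apply]
    have hdeg : (G.degree w : ℝ) * φf w = ∑ _b ∈ G.neighborFinset w, φf w := by
      rw [Finset.sum_const, card_neighborFinset_eq_degree, nsmul_eq_mul]
    rw [hdeg, ← Finset.sum_sub_distrib]
    have step1 : ∑ b ∈ G.neighborFinset w, (φf w - φf b) =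
        ∑ b ∈ G.neighborFinset w, ((Nuv w b : ℝ) - (Nuv b w : ℝ)) := by
      refine Finset.sum_congr rfl fun b hb => ?_
      rw [mem_neighborFinset] at hb
      rw [key1 w b hb]
    have step2 : ∑ b ∈ G.neighborFinset w, ((Nuv w b : ℝ) - (Nuv b w : ℝ)) =
        ∑ T ∈ 𝒯, ((if u = w then (1:ℝ) else 0) - (if v = w then (1:ℝ) else 0)) := by
      have hconv : ∀ a b : V, (Nuv a b : ℝ) =
          ∑ T ∈ 𝒯, (if QQ u v T a b then (1:ℝ) else 0) := by
        intro a b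
        rw [hNuv' a b]
        rw [Finset.sum_boole]
      calc ∑ b ∈ G.neighborFinset w, ((Nuv w b : ℝ) - (Nuv b w : ℝ))
          = ∑ b ∈ G.neighborFinset w, ∑ T ∈ 𝒯,
            ((if QQ u v T w b then (1:ℝ) else 0) - (if QQ u v T b w then (1:ℝ) else 0)) := by
            refine Finset.sum_congr rfl fun b _ => ?_
            rw [hconv w b, hconv b w, ← Finset.sum_sub_distrib]
        _ = ∑ T ∈ 𝒯, ∑ b ∈ G.neighborFinset w,
            ((if QQ u v T w b then (1:ℝ) else 0) - (if QQ u v T b w then (1:ℝ) else 0)) :=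
            Finset.sum_comm
        _ = ∑ T ∈ 𝒯, ((if u = w then (1:ℝ) else 0) - (if v = w then (1:ℝ) else 0)) := by
            refine Finset.sum_congr rfl fun T hT => ?_
            rw [h𝒯, Finset.mem_filter] at hT
            exact tree_divergence hT.2.1 hT.2.2 w
    rw [step1, step2, Finset.sum_const]
    rw [nsmul_eq_mul, ← hN']
    have : y w = (if u = w then (1:ℝ) else 0) - (if v = w then (1:ℝ) else 0) := by
      rw [hy_def]
      simp only [Pi.sub_apply, Pi.single_apply]
      congr 1 <;> simp [eq_comm]
    rw [Pi.smul_apply, this, smul_eq_mul]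
  -- Penrose : L x = y
  have key3 : (G.lapMatrix ℝ) *ᵥ x = y := by
    rw [hx_def]
    refine penrose_mulVec G hG Lp hpenrose.1 hpenrose.2.2.1 y ?_
    rw [hy_def]
    simp [Finset.sum_sub_distrib, Pi.single_apply]
  -- combine
  have hker : (G.lapMatrix ℝ) *ᵥ (φf - (N : ℝ) • x) = 0 := by
    rw [Matrix.mulVec_sub, key2]
    have : (G.lapMatrix ℝ) *ᵥ ((N : ℝ) • x) = (N : ℝ) • ((G.lapMatrix ℝ) *ᵥ x) :=
      Matrix.mulVec_smul ..
    rw [this, key3, sub_self]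
  have hconst := lap_kernel_const G hG _ hker u v
  simp only [Pi.sub_apply, Pi.smul_apply, smul_eq_mul] at hconst
  have hφdiff : φf u - φf v = (N : ℝ) * (x u - x v) := by linarith
  -- walk sum
  have hwalk : ∀ {x₁ y₁ : V} (q : G.Walk x₁ y₁),
      (q.darts.map (fun d => ((Nuv d.toProd.1 d.toProd.2 : ℝ) -
        (Nuv d.toProd.2 d.toProd.1 : ℝ)))).sum = φf x₁ - φf y₁ := by
    intro x₁ y₁ q
    induction q with
    | nil => simp
    | cons h q ih =>
      rw [Walk.darts_cons, List.map_cons, List.sum_cons, ih, key1 _ _ h]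
      ring
  rw [hwalk p]
  have hRHS : y ⬝ᵥ (Lp *ᵥ y) = x u - x v := by
    rw [hy_def, ← hx_def, sub_dotProduct, single_dotProduct,
      single_dotProduct, one_mul, one_mul]
  rw [hRHS, hφdiff]
  have hNne : (N : ℝ) ≠ 0 := by positivity
  field_simp
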